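/- Assume Martin's Axiom for σ-centered posets. For every tall summable ideal I_g there exists an I_g-ultrafilter on ℕ which is not a rapid ultrafilter. -/

import Mathlib

open Set Filter

/-- The summable ideal determined by `g`. -/
def Ig (g : ℕ → ℝ) : Set (Set ℕ) := {A | Summable (A.indicator g)}

/-- `g` determines a tall summable ideal: positive, divergent series, tends to `0`. -/
def SummableTall (g : ℕ → ℝ) : Prop :=
  (∀ n, 0 < g n) ∧ ¬ Summable g ∧ Tendsto g atTop (nhds 0)

/-- A subset of a poset is centered if every finite subset has a common lower bound. -/
def Centered {P : Type} [PartialOrder P] (S : Set P) : Prop :=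
  ∀ T : Finset P, ↑T ⊆ S → ∃ r : P, ∀ p ∈ T, r ≤ p

/-- A poset is σ-centered if it is a countable union of centered pieces. -/
def SigmaCentered (P : Type) [PartialOrder P] : Prop :=
  ∃ c : P → ℕ, ∀ n : ℕ, Centered {p : P | c p = n}

/-- A filter on a poset: nonempty, upward closed, downward directed. -/
def PosetFilter {P : Type} [PartialOrder P] (G : Set P) : Prop :=
  G.Nonempty ∧ (∀ p ∈ G, ∀ q, p ≤ q → q ∈ G) ∧
    (∀ p ∈ G, ∀ q ∈ G, ∃ r ∈ G, r ≤ p ∧ r ≤ q)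

/-- A dense subset of a poset. -/
def DenseBelow {P : Type} [PartialOrder P] (D : Set P) : Prop :=
  ∀ p : P, ∃ q ∈ D, q ≤ p

/-- Martin's Axiom for σ-centered posets. -/
def MASigmaCentered : Prop :=
  ∀ (P : Type) [PartialOrder P] [Nonempty P], SigmaCentered P →
    ∀ 𝒟 : Set (Set P), Cardinal.mk ↥𝒟 < Cardinal.continuum →
      (∀ D ∈ 𝒟, DenseBelow D) →
      ∃ G : Set P, PosetFilter G ∧ ∀ D ∈ 𝒟, (G ∩ D).Nonempty

/-- `U` is an `I`-ultrafilter: every function maps some member of `U` into `I`. -/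
def IUlt (U : Ultrafilter ℕ) (I : Set (Set ℕ)) : Prop :=
  ∀ F : ℕ → ℕ, ∃ A ∈ U, F '' A ∈ I

/-- `U` is rapid: the enumeration functions of its members form a dominating family. -/
def Rapid (U : Ultrafilter ℕ) : Prop :=
  ∀ f : ℕ → ℕ, ∃ A ∈ U, A.Infinite ∧ ∀ᶠ n in atTop, f n ≤ Nat.nth (· ∈ A) n

noncomputable section
namespace IgNR

open scoped Classical

/-! ### Counting -/

/-- The number of elements of `X` below `k`. -/
def cnt (X : Set ℕ) (k : ℕ) : ℕ := ((Finset.range k).filter (fun a => a ∈ X)).card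

lemma cnt_mono {X Y : Set ℕ} (h : X ⊆ Y) (k : ℕ) : cnt X k ≤ cnt Y k := by
  apply Finset.card_le_card
  intro a ha
  simp only [cnt, Finset.mem_filter] at *
  exact ⟨ha.1, h ha.2⟩

lemma finset_card_le_cnt {X : Set ℕ} {S : Finset ℕ} {k : ℕ}
    (h1 : ↑S ⊆ X) (h2 : ∀ a ∈ S, a < k) : S.card ≤ cnt X k := by
  apply Finset.card_le_card
  intro a ha
  simp only [cnt, Finset.mem_filter, Finset.mem_range]
  exact ⟨h2 a ha, h1 ha⟩

lemma cnt_split (X W : Set ℕ) (k : ℕ) : cnt X k ≤ cnt (X \ W) k + cnt (X ∩ W) k := by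
  refine le_trans (Finset.card_le_card ?_) (Finset.card_union_le _ _)
  intro a ha
  simp only [cnt, Finset.mem_filter, Finset.mem_union, Set.mem_diff, Set.mem_inter_iff] at *
  by_cases haW : a ∈ W
  · exact Or.inr ⟨ha.1, ha.2, haW⟩
  · exact Or.inl ⟨ha.1, ha.2, haW⟩

lemma cnt_le_toFinset_card {X : Set ℕ} (hX : X.Finite) (k : ℕ) :
    cnt X k ≤ hX.toFinset.card := by
  apply Finset.card_le_card
  intro a ha
  simp only [cnt, Finset.mem_filter, Set.Finite.mem_toFinset] at *
  exact ha.2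

lemma cnt_univ (k : ℕ) : cnt Set.univ k = k := by
  simp [cnt]

/-! ### The scale family τ -/

variable (g : ℕ → ℝ)

/-- The number of `m` with `δ ≤ g m` (as `ncard`, `0` if infinite). -/
def ng (δ : ℝ) : ℕ := {m : ℕ | δ ≤ g m}.ncard

lemma ngS_finite (h0 : Tendsto g atTop (nhds 0)) {δ : ℝ} (hδ : 0 < δ) :
    {m : ℕ | δ ≤ g m}.Finite := by
  have h1 : ∀ᶠ m in atTop, g m < δ := h0.eventually_lt_const hδ
  rw [← Nat.cofinite_eq_atTop, Filter.eventually_cofinite] at h1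
  exact h1.subset (fun m hm => by simp only [Set.mem_setOf_eq] at *; linarith)

lemma card_le_ng (h0 : Tendsto g atTop (nhds 0)) {δ : ℝ} (hδ : 0 < δ) {V : Finset ℕ}
    (hV : ∀ m ∈ V, δ ≤ g m) : V.card ≤ ng g δ := by
  rw [ng, ← Set.ncard_coe_finset]
  exact Set.ncard_le_ncard (fun m hm => hV m (by exact_mod_cast hm)) (ngS_finite g h0 hδ)

lemma ng_anti (h0 : Tendsto g atTop (nhds 0)) {δ δ' : ℝ} (h1 : 0 < δ) (h2 : δ ≤ δ') :
    ng g δ' ≤ ng g δ := by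
  rw [ng, ng]
  exact Set.ncard_le_ncard (fun m hm => by simp only [Set.mem_setOf_eq] at *; linarith)
    (ngS_finite g h0 h1)

/-- The iterated scale family. -/
def tau : ℕ → ℕ → ℕ
  | 0, n => n + 2
  | Q + 1, n => (tau Q n + ng g (((2 : ℝ) ^ n * (tau Q n : ℝ))⁻¹) + 2) ^ 3

lemma tau_ge (Q n : ℕ) : n + 2 ≤ tau g Q n := by
  induction Q with
  | zero => simp [tau]
  | succ Q ih =>
      rw [tau]
      calc n + 2 ≤ tau g Q n + ng g (((2:ℝ)^n * (tau g Q n : ℝ))⁻¹) + 2 := by omega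
      _ ≤ _ := Nat.le_self_pow (by norm_num) _

lemma tau_two_le (Q n : ℕ) : 2 ≤ tau g Q n := le_trans (by omega) (tau_ge g Q n)

lemma tau_lt_succ (Q n : ℕ) : tau g Q n < tau g (Q + 1) n := by
  rw [tau]
  set x := tau g Q n
  set y := ng g (((2:ℝ)^n * (x : ℝ))⁻¹)
  calc x < x + y + 2 := by omega
  _ ≤ (x + y + 2) ^ 3 := Nat.le_self_pow (by norm_num) _

lemma tau_mono_Q {Q Q' : ℕ} (h : Q ≤ Q') (n : ℕ) : tau g Q n ≤ tau g Q' n := by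
  induction Q' with
  | zero => simp_all
  | succ Q' ih =>
      rcases Nat.lt_or_ge Q (Q' + 1) with h1 | h1
      · exact le_trans (ih (by omega)) (tau_lt_succ g Q' n).le
      · have : Q = Q' + 1 := by omega
        subst this; rfl

lemma tau_add_le (Q Q₀ n : ℕ) :
    tau g Q n + tau g Q₀ n ≤ tau g (max Q Q₀ + 1) n := by
  set M := max Q Q₀
  have h1 : tau g Q n ≤ tau g M n := tau_mono_Q g (le_max_left _ _) n
  have h2 : tau g Q₀ n ≤ tau g M n := tau_mono_Q g (le_max_right _ _) n
  rw [tau]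
  set x := tau g M n
  set y := ng g (((2:ℝ)^n * (x : ℝ))⁻¹)
  have h3 : 2 ≤ x := tau_two_le g M n
  have e : (x + y + 2) ^ 3 = (x + y + 2) * (x + y + 2) * (x + y + 2) := by ring
  have h6 : 2 * (x + y + 2) ≤ (x + y + 2) ^ 3 := by
    rw [e]; nlinarith
  omega

lemma tau_sq_lt (Q n : ℕ) {y : ℕ} (hy : y ≤ ng g (((2:ℝ)^n * (tau g Q n : ℝ))⁻¹)) :
    tau g Q n * (tau g Q n + y) < tau g (Q + 1) n := by
  rw [tau]
  set x := tau g Q n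
  set Y := ng g (((2:ℝ)^n * (x : ℝ))⁻¹)
  have h2 : 2 ≤ x := tau_two_le g Q n
  have e : (x + Y + 2) ^ 3 = (x + Y + 2) * (x + Y + 2) * (x + Y + 2) := by ring
  have h4 : x * (x + y) ≤ (x + Y) * (x + Y) := by nlinarith
  have h5 : (x + Y) * (x + Y) < (x + Y + 2) * (x + Y + 2) * (x + Y + 2) := by nlinarith
  omega

/-- The diagonal function witnessing non-rapidity. -/
def ff : ℕ → ℕ := fun n => tau g n n

/-- Largeness: unboundedly often, `X` has at least `τ Q n` elements below `ff n`. -/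
def Lg (X : Set ℕ) : Prop := ∀ Q, ∃ᶠ n in atTop, tau g Q n ≤ cnt X (ff g n)

/-- Smallness. -/
def Sm (X : Set ℕ) : Prop := ∃ Q, ∀ᶠ n in atTop, cnt X (ff g n) < tau g Q n

lemma not_Lg_iff_Sm (X : Set ℕ) : ¬ Lg g X ↔ Sm g X := by
  simp only [Lg, Sm, not_forall, Filter.not_frequently, not_le]

lemma Lg_mono {X Y : Set ℕ} (h : X ⊆ Y) (hX : Lg g X) : Lg g Y := by
  intro Q
  exact (hX Q).mono (fun n hn => le_trans hn (cnt_mono h _))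

lemma Sm_mono {X Y : Set ℕ} (h : X ⊆ Y) (hY : Sm g Y) : Sm g X := by
  obtain ⟨Q, hQ⟩ := hY
  exact ⟨Q, hQ.mono (fun n hn => lt_of_le_of_lt (cnt_mono h _) hn)⟩

lemma Lg_univ : Lg g Set.univ := by
  intro Q
  apply ((Filter.eventually_ge_atTop Q).mono _).frequently
  intro n hn
  rw [cnt_univ]
  exact tau_mono_Q g hn n

lemma Lg_diff {Z W : Set ℕ} (hZ : Lg g Z) (hW : Sm g W) : Lg g (Z \ W) := by
  obtain ⟨Q₀, hQ₀⟩ := hW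
  intro Q
  have h1 := (hZ (max Q Q₀ + 1)).and_eventually hQ₀
  refine h1.mono (fun n hn => ?_)
  obtain ⟨h2, h3⟩ := hn
  have h4 := cnt_split Z W (ff g n)
  have h5 : cnt (Z ∩ W) (ff g n) ≤ cnt W (ff g n) :=
    cnt_mono (Set.inter_subset_right) _
  have h6 := tau_add_le g Q Q₀ n
  omega

lemma Sm_of_finite {W : Set ℕ} (hW : W.Finite) : Sm g W := by
  refine ⟨0, ?_⟩
  filter_upwards [Filter.eventually_ge_atTop hW.toFinset.card] with n hn
  have := cnt_le_toFinset_card hW (ff g n)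
  have h2 : tau g 0 n = n + 2 := rfl
  omega

lemma Lg_diff_finite {Z : Set ℕ} (hZ : Lg g Z) {E : Set ℕ} (hE : E.Finite) :
    Lg g (Z \ E) := Lg_diff g hZ (Sm_of_finite g hE)

lemma Lg_infinite {X : Set ℕ} (hX : Lg g X) : X.Infinite := by
  intro hfin
  obtain ⟨n, hn1, hn2⟩ := ((hX 0).and_eventually
    (Filter.eventually_ge_atTop hfin.toFinset.card)).exists
  have := cnt_le_toFinset_card hfin (ff g n)
  have h2 : tau g 0 n = n + 2 := rfl
  omega

end IgNR
end

noncomputable section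
namespace IgNR
open scoped Classical

variable (g : ℕ → ℝ)

/-- Core counting lemma: if no `t`-element subset of `X ∩ [0,N)` has a cheap image,
then `X ∩ [0,N)` is small. -/
lemma core (hpos : ∀ m, 0 < g m) (h0 : Tendsto g atTop (nhds 0)) (F : ℕ → ℕ) (X : Set ℕ)
    (N t : ℕ) (ht : 1 ≤ t) {b : ℝ} (hb : 0 < b)
    (hch : ∀ a ∈ X, g (F a) ≤ b / 2)
    (hbl : ∀ S : Finset ℕ, ↑S ⊆ X → (∀ a ∈ S, a < N) → S.card = t →
      b < ∑ m ∈ S.image F, g m) :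
    cnt X N ≤ t * (t + ng g (b / (2 * t))) := by
  set W := (Finset.range N).filter (fun a => a ∈ X) with hWdef
  have hWX : ∀ a ∈ W, a ∈ X := fun a ha => (Finset.mem_filter.mp ha).2
  have hWN : ∀ a ∈ W, a < N := fun a ha => Finset.mem_range.mp (Finset.mem_filter.mp ha).1
  have hsub : ∀ S : Finset ℕ, S ⊆ W → S.card = t → b < ∑ m ∈ S.image F, g m :=
    fun S hS hcard => hbl S (fun a ha => hWX a (hS ha)) (fun a ha => hWN a (hS ha)) hcard
  have htR : (0:ℝ) < t := by exact_mod_cast ht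
  -- fibers are small
  have hfib : ∀ m : ℕ, (W.filter (fun a => F a = m)).card ≤ t := by
    intro m
    by_contra h
    push_neg at h
    obtain ⟨S, hSsub, hScard⟩ := Finset.exists_subset_card_eq h.le
    have h1 : S ⊆ W := hSsub.trans (Finset.filter_subset _ _)
    have h2 := hsub S h1 hScard
    have hmem : S.Nonempty := by rw [← Finset.card_pos, hScard]; omega
    obtain ⟨a0, ha0⟩ := hmem
    have hFa0 : F a0 = m := (Finset.mem_filter.mp (hSsub ha0)).2
    have h3 : S.image F ⊆ {m} := by
      intro x hx
      obtain ⟨a, ha, rfl⟩ := Finset.mem_image.mp hx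
      simp [(Finset.mem_filter.mp (hSsub ha)).2]
    have h4 : ∑ m' ∈ S.image F, g m' ≤ g m := by
      calc ∑ m' ∈ S.image F, g m' ≤ ∑ m' ∈ ({m} : Finset ℕ), g m' :=
            Finset.sum_le_sum_of_subset_of_nonneg h3 (fun i _ _ => (hpos i).le)
        _ = g m := Finset.sum_singleton _ _
    have h5 : g m ≤ b / 2 := by rw [← hFa0]; exact hch a0 (hWX a0 (h1 ha0))
    linarith
  set V := W.image F with hVdef
  set Vc := V.filter (fun m => g m ≤ b / (2 * t)) with hVcdef
  set Vx := V.filter (fun m => ¬ g m ≤ b / (2 * t)) with hVxdef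
  have hVc : Vc.card ≤ t := by
    by_contra h
    push_neg at h
    obtain ⟨Vc', hVc'sub, hVc'card⟩ := Finset.exists_subset_card_eq h.le
    have hsubV : Vc' ⊆ W.image F := hVc'sub.trans (Finset.filter_subset _ _)
    obtain ⟨S', hS'sub, hS'img⟩ := Finset.subset_image_iff.mp hsubV
    have hcard : t ≤ S'.card := by
      rw [← hVc'card, ← hS'img]; exact Finset.card_image_le
    obtain ⟨S, hSsub, hScard⟩ := Finset.exists_subset_card_eq hcard
    have h2 := hsub S (hSsub.trans hS'sub) hScard
    have h3 : S.image F ⊆ Vc' := by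
      rw [← hS'img]; exact Finset.image_subset_image hSsub
    have h4 : ∑ m ∈ S.image F, g m ≤ ∑ m ∈ Vc', g m :=
      Finset.sum_le_sum_of_subset_of_nonneg h3 (fun i _ _ => (hpos i).le)
    have h5 : ∀ m ∈ Vc', g m ≤ b / (2 * t) :=
      fun m hm => (Finset.mem_filter.mp (hVc'sub hm)).2
    have h6 : ∑ m ∈ Vc', g m ≤ Vc'.card • (b / (2 * t)) :=
      Finset.sum_le_card_nsmul _ _ _ h5
    rw [hVc'card, nsmul_eq_mul] at h6
    have h7 : (t:ℝ) * (b / (2 * t)) = b / 2 := by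
      field_simp
    linarith
  have hVx : Vx.card ≤ ng g (b / (2 * t)) := by
    apply card_le_ng g h0 (by positivity)
    intro m hm
    exact (not_le.mp (Finset.mem_filter.mp hm).2).le
  have hVcard : V.card ≤ t + ng g (b / (2 * t)) := by
    have hU : V = Vc ∪ Vx := (Finset.filter_union_filter_not_eq _ _).symm
    calc V.card ≤ Vc.card + Vx.card := by
          rw [hU]; exact Finset.card_union_le _ _
      _ ≤ _ := by omega
  have hWcard : W.card ≤ V.card * t := by
    rw [Finset.card_eq_sum_card_fiberwise (f := F) (t := V)
      (fun x hx => Finset.mem_image_of_mem F hx)]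
    calc ∑ m ∈ V, (W.filter fun a => F a = m).card ≤ V.card • t :=
          Finset.sum_le_card_nsmul _ _ _ (fun m _ => hfib m)
      _ = V.card * t := by simp [nsmul_eq_mul]
  have hcnt : cnt X N = W.card := rfl
  calc cnt X N = W.card := hcnt
    _ ≤ V.card * t := hWcard
    _ ≤ (t + ng g (b / (2 * t))) * t := Nat.mul_le_mul_right _ hVcard
    _ = t * (t + ng g (b / (2 * t))) := Nat.mul_comm _ _

end IgNR
end

noncomputable section
namespace IgNR
open scoped Classical

variable (g : ℕ → ℝ)

/-! ### Closure under finite intersections -/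

/-- Closure of a family of sets under finite intersections (includes `univ`). -/
def cl (S : Set (Set ℕ)) : Set (Set ℕ) :=
  {X | ∃ t : Finset (Set ℕ), ↑t ⊆ S ∧ X = ⋂₀ ↑t}

lemma subset_cl {S : Set (Set ℕ)} : S ⊆ cl S := by
  intro X hX
  exact ⟨{X}, by simpa using hX, by simp⟩

lemma univ_mem_cl (S : Set (Set ℕ)) : Set.univ ∈ cl S :=
  ⟨∅, by simp, by simp⟩

lemma cl_mono {S T : Set (Set ℕ)} (h : S ⊆ T) : cl S ⊆ cl T := by
  rintro X ⟨t, ht, rfl⟩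
  exact ⟨t, ht.trans h, rfl⟩

lemma inter_mem_cl {S : Set (Set ℕ)} {X Y : Set ℕ} (hX : X ∈ cl S) (hY : Y ∈ cl S) :
    X ∩ Y ∈ cl S := by
  obtain ⟨t1, ht1, rfl⟩ := hX
  obtain ⟨t2, ht2, rfl⟩ := hY
  refine ⟨t1 ∪ t2, ?_, ?_⟩
  · push_cast
    exact Set.union_subset ht1 ht2
  · push_cast
    rw [Set.sInter_union]

lemma mem_cl_union {S T : Set (Set ℕ)} {Z : Set ℕ} (h : Z ∈ cl (S ∪ T)) :
    ∃ G ∈ cl S, ∃ t : Finset (Set ℕ), ↑t ⊆ T ∧ Z = G ∩ ⋂₀ ↑t := by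
  obtain ⟨t, ht, rfl⟩ := h
  refine ⟨⋂₀ ↑(t.filter (· ∈ S)), ⟨_, fun x hx => (Finset.mem_filter.mp hx).2, rfl⟩,
    t.filter (· ∉ S), fun x hx => ?_, ?_⟩
  · have h1 := Finset.mem_filter.mp hx
    exact (ht h1.1).resolve_left h1.2
  · rw [← Set.sInter_union, ← Finset.coe_union, Finset.filter_union_filter_not_eq]

/-- All finite intersections from `S` are large. -/
def LgAll (S : Set (Set ℕ)) : Prop := ∀ X ∈ cl S, Lg g X

lemma LgAll_decide {S : Set (Set ℕ)} (hS : LgAll g S) (B : Set ℕ) :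
    LgAll g (insert B S) ∨ LgAll g (insert Bᶜ S) := by
  have key : ∀ B' : Set ℕ, (∀ G ∈ cl S, Lg g (B' ∩ G)) → LgAll g (insert B' S) := by
    intro B' hB' Z hZ
    rw [Set.insert_eq, Set.union_comm] at hZ
    obtain ⟨G, hG, t, ht, rfl⟩ := mem_cl_union hZ
    rcases Finset.subset_singleton_iff.mp (by exact_mod_cast ht) with rfl | rfl
    · simp only [Finset.coe_empty, Set.sInter_empty, Set.inter_univ]
      exact hS G hG
    · simp only [Finset.coe_singleton, Set.sInter_singleton]
      exact Lg_mono g (by intro a ha; exact ⟨ha.2, ha.1⟩) (hB' G hG)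
  by_cases h : ∀ G ∈ cl S, Lg g (B ∩ G)
  · exact Or.inl (key B h)
  · push_neg at h
    obtain ⟨G₀, hG₀, hsm⟩ := h
    rw [not_Lg_iff_Sm] at hsm
    refine Or.inr (key Bᶜ ?_)
    intro G hG
    have h1 : Lg g (G ∩ G₀) := hS _ (inter_mem_cl hG hG₀)
    have h2 : Lg g ((G ∩ G₀) \ (B ∩ G₀)) := Lg_diff g h1 hsm
    refine Lg_mono g ?_ h2
    rintro a ⟨⟨haG, haG₀⟩, ha2⟩
    refine ⟨fun haB => ha2 ⟨haB, haG₀⟩, haG⟩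

lemma LgAll_insert_of_pseudo {S : Set (Set ℕ)} (hS : LgAll g S) {A : Set ℕ} (hA : Lg g A)
    (hfin : ∀ G ∈ cl S, (A \ G).Finite) : LgAll g (insert A S) := by
  intro Z hZ
  rw [Set.insert_eq, Set.union_comm] at hZ
  obtain ⟨G, hG, t, ht, rfl⟩ := mem_cl_union hZ
  rcases Finset.subset_singleton_iff.mp (by exact_mod_cast ht) with rfl | rfl
  · simp only [Finset.coe_empty, Set.sInter_empty, Set.inter_univ]
    exact hS G hG
  · simp only [Finset.coe_singleton, Set.sInter_singleton]
    have h1 : Lg g (A \ (A \ G)) := Lg_diff_finite g hA (hfin G hG)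
    refine Lg_mono g ?_ h1
    rintro a ⟨haA, ha2⟩
    exact ⟨by_contra (fun hc => ha2 ⟨haA, hc⟩), haA⟩

lemma LgAll_union_range {S : Set (Set ℕ)} (hS : LgAll g S)
    (Y G0 W : ℕ → Set ℕ)
    (hG0 : ∀ u, G0 u ∈ cl S) (hSm : ∀ u, Sm g (G0 u ∩ W u))
    (hW : ∀ u u', u ≤ u' → W u ⊆ W u')
    (hY : ∀ u, Y u = G0 u \ W u) : LgAll g (S ∪ Set.range Y) := by
  intro Z hZ
  obtain ⟨G, hG, t, ht, rfl⟩ := mem_cl_union hZ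
  -- key claim by induction on t
  have claim : ∀ t : Finset (Set ℕ), ↑t ⊆ Set.range Y →
      ∃ H ∈ cl S, ∃ u0 : ℕ, (H ∩ G0 u0) \ W u0 ⊆ ⋂₀ ↑t := by
    intro t
    induction t using Finset.induction_on with
    | empty => intro _; exact ⟨Set.univ, univ_mem_cl S, 0, by simp⟩
    | @insert Yu t hYu ih =>
        intro hins
        have h1 : ↑t ⊆ Set.range Y := by
          refine subset_trans ?_ hins
          push_cast
          exact Set.subset_insert _ _
        obtain ⟨H, hH, u0, hHsub⟩ := ih h1
        have h2 : Yu ∈ Set.range Y := hins (by push_cast; exact Set.mem_insert _ _)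
        obtain ⟨u, rfl⟩ := h2
        refine ⟨H ∩ G0 u0 ∩ G0 u, inter_mem_cl (inter_mem_cl hH (hG0 u0)) (hG0 u),
          max u u0, ?_⟩
        rintro a ⟨⟨⟨⟨haH, haG0u0⟩, haG0u⟩, _⟩, haW⟩
        have haWu : a ∉ W u := fun hc => haW (hW u _ (le_max_left _ _) hc)
        have haWu0 : a ∉ W u0 := fun hc => haW (hW u0 _ (le_max_right _ _) hc)
        push_cast
        rw [Set.sInter_insert]
        exact ⟨(hY u) ▸ ⟨haG0u, haWu⟩, hHsub ⟨⟨haH, haG0u0⟩, haWu0⟩⟩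
  obtain ⟨H, hH, u0, hHsub⟩ := claim t ht
  have h1 : Lg g (G ∩ H ∩ G0 u0) := hS _ (inter_mem_cl (inter_mem_cl hG hH) (hG0 u0))
  have h2 : Lg g ((G ∩ H ∩ G0 u0) \ (G0 u0 ∩ W u0)) := Lg_diff g h1 (hSm u0)
  refine Lg_mono g ?_ h2
  rintro a ⟨⟨⟨haG, haH⟩, haG0⟩, ha2⟩
  have haW : a ∉ W u0 := fun hc => ha2 ⟨haG0, hc⟩
  exact ⟨haG, hHsub ⟨⟨haH, haG0⟩, haW⟩⟩

/-! ### Cardinality of the closure -/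

lemma mk_cl_le (S : Set (Set ℕ)) :
    Cardinal.mk (cl S) ≤ max Cardinal.aleph0 (Cardinal.mk S) := by
  have hinj : ∃ f : cl S → Finset ↥S, Function.Injective f := by
    refine ⟨fun X => ((Classical.choose X.2).subtype (· ∈ S)), ?_⟩
    intro X Y hXY
    have hX := Classical.choose_spec X.2
    have hY := Classical.choose_spec Y.2
    apply Subtype.ext
    rw [hX.2, hY.2]
    have recover : ∀ (t : Finset (Set ℕ)), ↑t ⊆ S →
        (t.subtype (· ∈ S)).map (Function.Embedding.subtype _) = t := by
      intro t ht
      rw [Finset.subtype_map]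
      exact Finset.filter_true_of_mem (fun x hx => ht hx)
    have := congrArg (fun u => Finset.map (Function.Embedding.subtype (· ∈ S)) u) hXY
    simp only at this
    rw [recover _ hX.1, recover _ hY.1] at this
    rw [this]
  obtain ⟨f, hf⟩ := hinj
  calc Cardinal.mk (cl S) ≤ Cardinal.mk (Finset ↥S) := Cardinal.mk_le_of_injective hf
    _ ≤ Cardinal.mk (List ↥S) := Cardinal.mk_le_of_injective
        (f := fun s : Finset ↥S => s.toList) (fun s t hst => by
        have h1 : s.toList.toFinset = s := Finset.toList_toFinset s
        have h2 : t.toList.toFinset = t := Finset.toList_toFinset t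
        simp only at hst
        rw [← h1, ← h2, hst])
    _ ≤ max Cardinal.aleph0 (Cardinal.mk ↥S) := Cardinal.mk_list_le_max _

end IgNR
end

noncomputable section
namespace IgNR
open scoped Classical

variable (g : ℕ → ℝ)

/-- Image cost of extending a stem. -/
def cost (F : ℕ → ℕ) (s s' : Finset ℕ) : ℝ := ∑ m ∈ s'.image F \ s.image F, g m

lemma cost_nonneg (hpos : ∀ m, 0 < g m) (F : ℕ → ℕ) (s s' : Finset ℕ) :
    0 ≤ cost g F s s' :=
  Finset.sum_nonneg (fun m _ => (hpos m).le)

lemma cost_self (F : ℕ → ℕ) (s : Finset ℕ) : cost g F s s = 0 := by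
  simp [cost]

lemma sum_union_le (hpos : ∀ m, 0 < g m) (A B : Finset ℕ) :
    ∑ m ∈ A ∪ B, g m ≤ ∑ m ∈ A, g m + ∑ m ∈ B, g m := by
  rw [← Finset.union_sdiff_self_eq_union, Finset.sum_union (Finset.disjoint_sdiff)]
  have : ∑ m ∈ B \ A, g m ≤ ∑ m ∈ B, g m :=
    Finset.sum_le_sum_of_subset_of_nonneg (Finset.sdiff_subset) (fun m _ _ => (hpos m).le)
  linarith

lemma cost_triangle (hpos : ∀ m, 0 < g m) (F : ℕ → ℕ) (s s' s'' : Finset ℕ) :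
    cost g F s s'' ≤ cost g F s s' + cost g F s' s'' := by
  have hsub : s''.image F \ s.image F ⊆
      (s'.image F \ s.image F) ∪ (s''.image F \ s'.image F) := by
    intro m hm
    rw [Finset.mem_sdiff] at hm
    by_cases h : m ∈ s'.image F
    · exact Finset.mem_union_left _ (Finset.mem_sdiff.mpr ⟨h, hm.2⟩)
    · exact Finset.mem_union_right _ (Finset.mem_sdiff.mpr ⟨hm.1, h⟩)
  calc cost g F s s'' ≤ ∑ m ∈ (s'.image F \ s.image F) ∪ (s''.image F \ s'.image F), g m :=
        Finset.sum_le_sum_of_subset_of_nonneg hsub (fun m _ _ => (hpos m).le)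
    _ ≤ _ := sum_union_le g hpos _ _

lemma cost_union_le (hpos : ∀ m, 0 < g m) (F : ℕ → ℕ) (s S : Finset ℕ) :
    cost g F s (s ∪ S) ≤ ∑ m ∈ S.image F, g m := by
  apply Finset.sum_le_sum_of_subset_of_nonneg _ (fun m _ _ => (hpos m).le)
  intro m hm
  rw [Finset.mem_sdiff, Finset.image_union, Finset.mem_union] at hm
  exact hm.1.resolve_left hm.2

/-! ### The budget forcing poset -/

/-- Conditions of the budget forcing. -/
def BP (𝒢 : Set (Set ℕ)) : Type :=
  {p : Finset ℕ × ℚ × Set ℕ // 0 < p.2.1 ∧ p.2.2 ∈ 𝒢}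

namespace BP
variable {𝒢 : Set (Set ℕ)}

def s (p : BP 𝒢) : Finset ℕ := p.1.1
def q (p : BP 𝒢) : ℚ := p.1.2.1
def G (p : BP 𝒢) : Set ℕ := p.1.2.2

lemma qpos (p : BP 𝒢) : 0 < p.q := p.2.1
lemma Gmem (p : BP 𝒢) : p.G ∈ 𝒢 := p.2.2

@[simp] lemma s_mk (x : Finset ℕ × ℚ × Set ℕ) (h) : BP.s (⟨x, h⟩ : BP 𝒢) = x.1 := rfl
@[simp] lemma q_mk (x : Finset ℕ × ℚ × Set ℕ) (h) : BP.q (⟨x, h⟩ : BP 𝒢) = x.2.1 := rfl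
@[simp] lemma G_mk (x : Finset ℕ × ℚ × Set ℕ) (h) : BP.G (⟨x, h⟩ : BP 𝒢) = x.2.2 := rfl

lemma ext {p q : BP 𝒢} (h1 : p.s = q.s) (h2 : p.q = q.q) (h3 : p.G = q.G) : p = q := by
  apply Subtype.ext
  exact Prod.ext h1 (Prod.ext h2 h3)

end BP

/-- The order on the budget forcing. -/
def BPle (g : ℕ → ℝ) (F : ℕ → ℕ) {𝒢 : Set (Set ℕ)} (p q : BP 𝒢) : Prop :=
  q.s ⊆ p.s ∧ p.G ⊆ q.G ∧
    (∀ a ∈ p.s, a ∉ q.s → a ∈ q.G ∧ ∀ b ∈ q.s, b < a) ∧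
    (p.q : ℝ) + cost g F q.s p.s ≤ (q.q : ℝ)

/-- The budget forcing is a partial order. -/
def BPorder (g : ℕ → ℝ) (hpos : ∀ m, 0 < g m) (F : ℕ → ℕ) (𝒢 : Set (Set ℕ)) :
    PartialOrder (BP 𝒢) where
  le := BPle g F
  lt p q := BPle g F p q ∧ ¬ BPle g F q p
  lt_iff_le_not_ge _ _ := Iff.rfl
  le_refl p := ⟨subset_rfl, subset_rfl, fun a ha ha' => absurd ha ha',
    by rw [cost_self]; simp⟩
  le_trans := by
    rintro p q r ⟨h1, h2, h3, h4⟩ ⟨h1', h2', h3', h4'⟩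
    refine ⟨h1'.trans h1, h2.trans h2', ?_, ?_⟩
    · intro a ha ha'
      by_cases haq : a ∈ q.s
      · exact h3' a haq ha'
      · obtain ⟨hG, hb⟩ := h3 a ha haq
        exact ⟨h2' hG, fun b hb' => hb b (h1' hb')⟩
    · have h5 := cost_triangle g hpos F r.s q.s p.s
      linarith
  le_antisymm := by
    rintro p q ⟨h1, h2, h3, h4⟩ ⟨h1', h2', h3', h4'⟩
    have hs : p.s = q.s := Finset.Subset.antisymm h1' h1
    have hG : p.G = q.G := Set.Subset.antisymm h2 h2'
    rw [hs, cost_self] at h4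
    rw [← hs, cost_self] at h4'
    have hq : p.q = q.q := by
      have : (p.q : ℝ) = (q.q : ℝ) := by linarith
      exact_mod_cast this
    exact BP.ext hs hq hG

/-- The main Mathias/budget forcing step. -/lemma MAstep2 (hMA : MASigmaCentered) (hpos : ∀ m, 0 < g m)
    (h0 : Tendsto g atTop (nhds 0)) (F : ℕ → ℕ) (𝒢 : Set (Set ℕ))
    (hUniv : Set.univ ∈ 𝒢) (hInt : ∀ X ∈ 𝒢, ∀ Y ∈ 𝒢, X ∩ Y ∈ 𝒢)
    (hLg : ∀ X ∈ 𝒢, Lg g X) (hcard : Cardinal.mk 𝒢 < Cardinal.continuum)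
    (hY : ∀ u : ℕ, ∃ Y ∈ 𝒢, ∀ a ∈ Y, g (F a) ≤ ((2:ℝ) ^ u)⁻¹) :
    ∃ A : Set ℕ, Lg g A ∧ (∀ G ∈ 𝒢, (A \ G).Finite) ∧
      Summable ((F '' A).indicator g) := by
  set P := BP 𝒢 with hP
  letI : PartialOrder P := BPorder g hpos F 𝒢
  have hle : ∀ p q : P, (p ≤ q) = BPle g F p q := fun p q => rfl
  haveI : Nonempty P := ⟨⟨(∅, 1, Set.univ), by norm_num, hUniv⟩⟩
  have hHex : ∀ T : Finset P, ∃ H ∈ 𝒢, ∀ p ∈ T, H ⊆ p.G := by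
    intro T
    induction T using Finset.induction_on with
    | empty => exact ⟨Set.univ, hUniv, by simp⟩
    | @insert p T hp ih =>
        obtain ⟨H, hH, hHsub⟩ := ih
        refine ⟨H ∩ p.G, hInt _ hH _ p.2.2, ?_⟩
        intro p' hp'
        rcases Finset.mem_insert.mp hp' with rfl | hp''
        · exact Set.inter_subset_right
        · exact Set.inter_subset_left.trans (hHsub p' hp'')
  have hσ : SigmaCentered P := by
    refine ⟨fun p => Encodable.encode (p.s, p.q), fun n T hT => ?_⟩
    rcases T.eq_empty_or_nonempty with rfl | ⟨p₀, hp₀⟩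
    · obtain ⟨p⟩ := (inferInstance : Nonempty P)
      exact ⟨p, by simp⟩
    · have hsame : ∀ p ∈ T, p.s = p₀.s ∧ p.q = p₀.q := by
        intro p hp
        have h1 : Encodable.encode (p.s, p.q) =
            Encodable.encode (p₀.s, p₀.q) := by
          have hp' := hT hp
          have hp₀' := hT hp₀
          simp only [Set.mem_setOf_eq] at hp' hp₀'
          rw [hp', hp₀']
        have h2 := Encodable.encode_injective h1
        rw [Prod.mk.injEq] at h2
        exact h2
      obtain ⟨H, hH, hHsub⟩ := hHex T
      refine ⟨⟨(p₀.s, p₀.q, H), p₀.2.1, hH⟩, ?_⟩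
      intro p hp
      obtain ⟨hs, hq⟩ := hsame p hp
      refine ⟨by rw [hs]; exact subset_rfl, hHsub p hp, ?_, ?_⟩
      · intro a ha ha'
        rw [hs] at ha'
        exact absurd ha ha'
      · show (p₀.q : ℝ) + cost g F p.s p₀.s ≤ (p.q : ℝ)
        rw [hs, cost_self, hq]
        simp
  set DD : Set ℕ → Set P := fun H => {p : P | p.G ⊆ H} with hDD
  set EE : ℕ → ℕ → Set P := fun Q n₀ =>
    {p : P | ∃ n, n₀ ≤ n ∧ tau g Q n ≤ cnt (↑p.s) (ff g n)} with hEE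
  have hDDdense : ∀ H ∈ 𝒢, DenseBelow (DD H) := by
    intro H hH p
    refine ⟨⟨(p.s, p.q, p.G ∩ H), p.2.1, hInt _ p.Gmem _ hH⟩,
      Set.inter_subset_right, ?_⟩
    refine ⟨subset_rfl, Set.inter_subset_left, fun a ha ha' => absurd ha ha', ?_⟩
    show (p.q : ℝ) + cost g F p.s p.s ≤ (p.q : ℝ)
    rw [cost_self]; simp
  have hEEdense : ∀ Q n₀ : ℕ, DenseBelow (EE Q n₀) := by
    intro Q n₀ p
    obtain ⟨⟨s, q, G⟩, hq, hG⟩ := p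
    have hq0 : (0:ℝ) < (q:ℝ) := by exact_mod_cast hq
    obtain ⟨u, hu⟩ := pow_unbounded_of_one_lt (8 / (q:ℝ)) one_lt_two
    have h2u : (0:ℝ) < 2 ^ u := by positivity
    have hq8 : ((2:ℝ) ^ u)⁻¹ ≤ (q:ℝ) / 8 := by
      rw [inv_le_comm₀ h2u (by positivity), inv_div]
      exact hu.le
    obtain ⟨Y, hY𝒢, hYcheap⟩ := hY u
    set N := s.sup id with hNdef
    set X := (G ∩ Y) \ Set.Iic N with hXdef
    have hXLg : Lg g X := Lg_diff_finite g (hLg _ (hInt _ hG _ hY𝒢)) (Set.finite_Iic N)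
    have hev : ∀ᶠ n in atTop, ((4:ℝ) ≤ (q:ℝ) * 2 ^ n ∧ n₀ ≤ n) := by
      obtain ⟨n₂, hn₂⟩ := pow_unbounded_of_one_lt (4 / (q:ℝ)) one_lt_two
      filter_upwards [Filter.eventually_ge_atTop n₂, Filter.eventually_ge_atTop n₀]
        with n h1 h2
      refine ⟨?_, h2⟩
      have h3 : (2:ℝ) ^ n₂ ≤ 2 ^ n := pow_le_pow_right₀ one_le_two h1
      have h4 : (4:ℝ) / q < 2 ^ n := lt_of_lt_of_le hn₂ h3
      have h5 : (4:ℝ) = (4 / q) * q := by field_simp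
      nlinarith
    obtain ⟨n, hn1, hn4, hnn₀⟩ := ((hXLg (Q + 1)).and_eventually hev).exists
    set t := tau g Q n with htdef
    have ht1 : 1 ≤ t := le_trans (by norm_num) (tau_two_le g Q n)
    have htR : (0:ℝ) < (t:ℝ) := by exact_mod_cast lt_of_lt_of_le (by norm_num) ht1
    have hS : ∃ S : Finset ℕ, ↑S ⊆ X ∧ (∀ a ∈ S, a < ff g n) ∧ S.card = t ∧
        ∑ m ∈ S.image F, g m ≤ (q:ℝ) / 2 := by
      by_contra hcon
      push_neg at hcon
      have hch : ∀ a ∈ X, g (F a) ≤ (q:ℝ)/2/2 := by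
        intro a ha
        have h2 := hYcheap a ha.1.2
        have h3 : ((2:ℝ)^u)⁻¹ ≤ (q:ℝ)/2/2 := by
          calc ((2:ℝ)^u)⁻¹ ≤ (q:ℝ)/8 := hq8
          _ ≤ (q:ℝ)/2/2 := by linarith
        linarith
      have hcore := core g hpos h0 F X (ff g n) t ht1 (b := (q:ℝ)/2) (by positivity)
        hch (fun S h1 h2 h3 => hcon S h1 h2 h3)
      have hng : ng g ((q:ℝ)/2 / (2 * (t:ℝ))) ≤ ng g (((2:ℝ) ^ n * (t:ℝ))⁻¹) := by
        apply ng_anti g h0 (by positivity)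
        rw [div_div]
        rw [inv_le_comm₀ (by positivity) (by positivity), inv_div]
        have h9 : (2:ℝ) * (2 * t) / q ≤ 2 ^ n * t := by
          rw [div_le_iff₀ hq0]
          nlinarith
        linarith [h9]
      have hlt := tau_sq_lt g Q n hng
      rw [← htdef] at hlt
      omega
    obtain ⟨S, hSX, hSlt, hScard, hSsum⟩ := hS
    refine ⟨⟨(s ∪ S, q/4, G ∩ Y), by positivity, hInt _ hG _ hY𝒢⟩, ?_, ?_⟩
    · refine ⟨n, hnn₀, ?_⟩
      calc tau g Q n = S.card := hScard.symm
      _ ≤ cnt (↑(s ∪ S)) (ff g n) := finset_card_le_cnt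
          (by intro a ha
              simp only [Finset.coe_union, Set.mem_union]
              exact Or.inr ha) hSlt
    · refine ⟨Finset.subset_union_left, Set.inter_subset_left, ?_, ?_⟩
      · intro a ha ha'
        have haS : a ∈ S := by
          rcases Finset.mem_union.mp ha with h | h
          · exact absurd h ha'
          · exact h
        have haX : a ∈ X := hSX haS
        refine ⟨haX.1.1, ?_⟩
        intro b hb
        have hbN : b ≤ N := Finset.le_sup (f := id) hb
        have haN : ¬ a ≤ N := haX.2
        omega
      · have hc := cost_union_le g hpos F s S
        have hcS := le_trans hc hSsum
        have hq4 : (((q/4 : ℚ)) : ℝ) = (q:ℝ)/4 := by push_cast; ring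
        show ((q/4 : ℚ) : ℝ) + cost g F s (s ∪ S) ≤ (q : ℝ)
        rw [hq4]
        linarith
  set 𝒟 : Set (Set P) := (DD '' 𝒢) ∪ Set.range (fun Qn : ℕ × ℕ => EE Qn.1 Qn.2) with h𝒟
  have h𝒟card : Cardinal.mk ↥𝒟 < Cardinal.continuum := by
    apply lt_of_le_of_lt (Cardinal.mk_union_le _ _)
    apply Cardinal.add_lt_of_lt Cardinal.aleph0_le_continuum
    · exact lt_of_le_of_lt Cardinal.mk_image_le hcard
    · exact lt_of_le_of_lt (le_trans Cardinal.mk_range_le Cardinal.mk_le_aleph0)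
        Cardinal.aleph0_lt_continuum
  have h𝒟dense : ∀ D ∈ 𝒟, DenseBelow D := by
    intro D hD
    rcases hD with ⟨H, hH, rfl⟩ | ⟨⟨Q, n₀⟩, rfl⟩
    · exact hDDdense H hH
    · exact hEEdense Q n₀
  obtain ⟨Gg, ⟨hne, hup, hdir⟩, hmeet⟩ := hMA P hσ 𝒟 h𝒟card h𝒟dense
  set A : Set ℕ := {a | ∃ p ∈ Gg, a ∈ p.s} with hA
  have hstem : ∀ p ∈ Gg, ∀ a ∈ A, a ∈ p.s ∨ a ∈ p.G := by
    intro p hp a ha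
    obtain ⟨p', hp', hap'⟩ := ha
    obtain ⟨r, hr, hrp, hrp'⟩ := hdir p hp p' hp'
    have har : a ∈ r.s := hrp'.1 hap'
    by_cases h : a ∈ p.s
    · exact Or.inl h
    · exact Or.inr (hrp.2.2.1 a har h).1
  have hALg : Lg g A := by
    intro Q
    rw [Filter.frequently_atTop]
    intro n₀
    obtain ⟨p, hpG, hpE⟩ := hmeet (EE Q n₀) (Or.inr ⟨(Q, n₀), rfl⟩)
    obtain ⟨n, hn1, hn2⟩ := hpE
    refine ⟨n, hn1, le_trans hn2 (cnt_mono ?_ _)⟩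
    intro a ha
    exact ⟨p, hpG, by exact_mod_cast ha⟩
  have hAfin : ∀ G ∈ 𝒢, (A \ G).Finite := by
    intro G hG
    obtain ⟨p, hpG, hpD⟩ := hmeet (DD G) (Or.inl ⟨G, hG, rfl⟩)
    apply Set.Finite.subset p.s.finite_toSet
    rintro a ⟨haA, haG⟩
    rcases hstem p hpG a haA with h | h
    · exact h
    · exact absurd (hpD h) haG
  obtain ⟨p₀, hp₀⟩ := hne
  set C := (∑ m ∈ p₀.s.image F, g m) + (p₀.q : ℝ) with hC
  have hM0 : ∀ M : Finset ℕ, ↑M ⊆ F '' A → ∃ r ∈ Gg, r ≤ p₀ ∧ M ⊆ r.s.image F := by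
    intro M
    induction M using Finset.induction_on with
    | empty =>
        intro _
        obtain ⟨r, hr, h1, h2⟩ := hdir p₀ hp₀ p₀ hp₀
        exact ⟨r, hr, h1, by simp⟩
    | @insert m M hm ih =>
        intro hins
        obtain ⟨r, hr, hrle, hrsub⟩ := ih (by
          refine subset_trans ?_ hins
          push_cast
          exact Set.subset_insert _ _)
        have hmA : m ∈ F '' A := hins (by push_cast; exact Set.mem_insert _ _)
        obtain ⟨a, haA, rfl⟩ := hmA
        obtain ⟨pa, hpa, hapa⟩ := haA
        obtain ⟨r', hr', h1, h2⟩ := hdir r hr pa hpa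
        refine ⟨r', hr', le_trans h1 hrle, ?_⟩
        intro x hx
        rcases Finset.mem_insert.mp hx with rfl | hx'
        · exact Finset.mem_image_of_mem F (h2.1 hapa)
        · exact Finset.image_subset_image h1.1 (hrsub hx')
  have hMbound : ∀ M : Finset ℕ, ↑M ⊆ F '' A → ∑ m ∈ M, g m ≤ C := by
    intro M hMsub
    obtain ⟨r, hr, hrle, hrsub⟩ := hM0 M hMsub
    have h1 : ∑ m ∈ M, g m ≤ ∑ m ∈ r.s.image F, g m :=
      Finset.sum_le_sum_of_subset_of_nonneg hrsub (fun m _ _ => (hpos m).le)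
    have h2 : ∑ m ∈ r.s.image F, g m ≤
        ∑ m ∈ p₀.s.image F, g m + cost g F p₀.s r.s := by
      have hsplit : r.s.image F ⊆ p₀.s.image F ∪ (r.s.image F \ p₀.s.image F) := by
        intro x hx
        by_cases h : x ∈ p₀.s.image F
        · exact Finset.mem_union_left _ h
        · exact Finset.mem_union_right _ (Finset.mem_sdiff.mpr ⟨hx, h⟩)
      calc ∑ m ∈ r.s.image F, g m
          ≤ ∑ m ∈ p₀.s.image F ∪ (r.s.image F \ p₀.s.image F), g m :=
            Finset.sum_le_sum_of_subset_of_nonneg hsplit (fun m _ _ => (hpos m).le)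
        _ ≤ _ := sum_union_le g hpos _ _
    have h3 : cost g F p₀.s r.s ≤ (p₀.q : ℝ) := by
      have h4 := hrle.2.2.2
      have hrq : (0:ℝ) < (r.q : ℝ) := by exact_mod_cast r.2.1
      linarith
    linarith
  refine ⟨A, hALg, hAfin, ?_⟩
  apply summable_of_sum_range_le (c := C)
    (fun m => Set.indicator_nonneg (fun x _ => (hpos x).le) m)
  intro n
  have heq : ∑ i ∈ Finset.range n, (F '' A).indicator g i =
      ∑ i ∈ (Finset.range n).filter (· ∈ F '' A), g i := by
    calc ∑ i ∈ Finset.range n, (F '' A).indicator g i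
        = ∑ i ∈ (Finset.range n).filter (· ∈ F '' A), (F '' A).indicator g i :=
          (Finset.sum_filter_of_ne (fun i _ hi => Set.mem_of_indicator_ne_zero hi)).symm
      _ = _ := Finset.sum_congr rfl
          (fun i hi => Set.indicator_of_mem (Finset.mem_filter.mp hi).2 g)
  rw [heq]
  apply hMbound
  intro m hm
  have := Finset.mem_coe.mp hm
  exact (Finset.mem_filter.mp this).2

end IgNR
end

noncomputable section
namespace IgNR
open scoped Classical

variable (g : ℕ → ℝ)

lemma exists_stem {X : Set ℕ} {k t : ℕ} (h : t ≤ cnt X k) :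
    ∃ S : Finset ℕ, ↑S ⊆ X ∧ (∀ a ∈ S, a < k) ∧ S.card = t := by
  obtain ⟨S, hS, hcard⟩ := Finset.exists_subset_card_eq h
  exact ⟨S, fun a ha => (Finset.mem_filter.mp (hS ha)).2,
    fun a ha => Finset.mem_range.mp (Finset.mem_filter.mp (hS ha)).1, hcard⟩

/-- Conditions of the localized Mathias forcing. -/
def KP (F : ℕ → ℕ) (K : Set ℕ) (𝒢 : Set (Set ℕ)) : Type :=
  {p : Finset ℕ × Set ℕ // ↑p.1 ⊆ F ⁻¹' K ∧ p.2 ∈ 𝒢}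

namespace KP
variable {F : ℕ → ℕ} {K : Set ℕ} {𝒢 : Set (Set ℕ)}

def s (p : KP F K 𝒢) : Finset ℕ := p.1.1
def G (p : KP F K 𝒢) : Set ℕ := p.1.2

lemma ssub (p : KP F K 𝒢) : ↑p.s ⊆ F ⁻¹' K := p.2.1
lemma Gmem (p : KP F K 𝒢) : p.G ∈ 𝒢 := p.2.2

@[simp] lemma s_mk (x : Finset ℕ × Set ℕ) (h) : KP.s (⟨x, h⟩ : KP F K 𝒢) = x.1 := rfl
@[simp] lemma G_mk (x : Finset ℕ × Set ℕ) (h) : KP.G (⟨x, h⟩ : KP F K 𝒢) = x.2 := rfl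

lemma ext {p q : KP F K 𝒢} (h1 : p.s = q.s) (h2 : p.G = q.G) : p = q := by
  apply Subtype.ext
  exact Prod.ext h1 h2

end KP

/-- The order on the localized Mathias forcing. -/
def KPle {F : ℕ → ℕ} {K : Set ℕ} {𝒢 : Set (Set ℕ)} (p q : KP F K 𝒢) : Prop :=
  q.s ⊆ p.s ∧ p.G ⊆ q.G ∧ (∀ a ∈ p.s, a ∉ q.s → a ∈ q.G ∧ ∀ b ∈ q.s, b < a)

def KPorder (F : ℕ → ℕ) (K : Set ℕ) (𝒢 : Set (Set ℕ)) : PartialOrder (KP F K 𝒢) where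
  le := KPle
  lt p q := KPle p q ∧ ¬ KPle q p
  lt_iff_le_not_ge _ _ := Iff.rfl
  le_refl p := ⟨subset_rfl, subset_rfl, fun a ha ha' => absurd ha ha'⟩
  le_trans := by
    rintro p q r ⟨h1, h2, h3⟩ ⟨h1', h2', h3'⟩
    refine ⟨h1'.trans h1, h2.trans h2', ?_⟩
    intro a ha ha'
    by_cases haq : a ∈ q.s
    · exact h3' a haq ha'
    · obtain ⟨hG, hb⟩ := h3 a ha haq
      exact ⟨h2' hG, fun b hb' => hb b (h1' hb')⟩
  le_antisymm := by
    rintro p q ⟨h1, h2, h3⟩ ⟨h1', h2', h3'⟩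
    exact KP.ext (Finset.Subset.antisymm h1' h1) (Set.Subset.antisymm h2 h2')

/-- The localized forcing step. -/
lemma MAstep1 (hMA : MASigmaCentered) (F : ℕ → ℕ) (K : Set ℕ) (𝒢 : Set (Set ℕ))
    (hUniv : Set.univ ∈ 𝒢) (hInt : ∀ X ∈ 𝒢, ∀ Y ∈ 𝒢, X ∩ Y ∈ 𝒢)
    (hcard : Cardinal.mk 𝒢 < Cardinal.continuum)
    (hLgK : ∀ G ∈ 𝒢, Lg g (G ∩ F ⁻¹' K)) :
    ∃ A : Set ℕ, Lg g A ∧ (∀ G ∈ 𝒢, (A \ G).Finite) ∧ A ⊆ F ⁻¹' K := by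
  set P := KP F K 𝒢 with hP
  letI : PartialOrder P := KPorder F K 𝒢
  haveI : Nonempty P := ⟨⟨(∅, Set.univ), by simp, hUniv⟩⟩
  have hHex : ∀ T : Finset P, ∃ H ∈ 𝒢, ∀ p ∈ T, H ⊆ p.G := by
    intro T
    induction T using Finset.induction_on with
    | empty => exact ⟨Set.univ, hUniv, by simp⟩
    | @insert p T hp ih =>
        obtain ⟨H, hH, hHsub⟩ := ih
        refine ⟨H ∩ p.G, hInt _ hH _ p.Gmem, ?_⟩
        intro p' hp'
        rcases Finset.mem_insert.mp hp' with rfl | hp''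
        · exact Set.inter_subset_right
        · exact Set.inter_subset_left.trans (hHsub p' hp'')
  have hσ : SigmaCentered P := by
    refine ⟨fun p => Encodable.encode p.s, fun n T hT => ?_⟩
    rcases T.eq_empty_or_nonempty with rfl | ⟨p₀, hp₀⟩
    · obtain ⟨p⟩ := (inferInstance : Nonempty P)
      exact ⟨p, by simp⟩
    · have hsame : ∀ p ∈ T, p.s = p₀.s := by
        intro p hp
        have h1 : Encodable.encode p.s = Encodable.encode p₀.s := by
          have hp' := hT hp
          have hp₀' := hT hp₀
          simp only [Set.mem_setOf_eq] at hp' hp₀'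
          rw [hp', hp₀']
        exact Encodable.encode_injective h1
      obtain ⟨H, hH, hHsub⟩ := hHex T
      refine ⟨⟨(p₀.s, H), p₀.ssub, hH⟩, ?_⟩
      intro p hp
      have hs := hsame p hp
      refine ⟨by rw [hs]; exact subset_rfl, hHsub p hp, ?_⟩
      intro a ha ha'
      rw [hs] at ha'
      exact absurd ha ha'
  set DD : Set ℕ → Set P := fun H => {p : P | p.G ⊆ H} with hDD
  set EE : ℕ → ℕ → Set P := fun Q n₀ =>
    {p : P | ∃ n, n₀ ≤ n ∧ tau g Q n ≤ cnt (↑p.s) (ff g n)} with hEE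
  have hDDdense : ∀ H ∈ 𝒢, DenseBelow (DD H) := by
    intro H hH p
    refine ⟨⟨(p.s, p.G ∩ H), p.ssub, hInt _ p.Gmem _ hH⟩,
      Set.inter_subset_right, ?_⟩
    exact ⟨subset_rfl, Set.inter_subset_left, fun a ha ha' => absurd ha ha'⟩
  have hEEdense : ∀ Q n₀ : ℕ, DenseBelow (EE Q n₀) := by
    intro Q n₀ p
    obtain ⟨⟨s, G⟩, hsK, hG⟩ := p
    set N := s.sup id with hNdef
    set X := (G ∩ F ⁻¹' K) \ Set.Iic N with hXdef
    have hXLg : Lg g X := Lg_diff_finite g (hLgK _ hG) (Set.finite_Iic N)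
    obtain ⟨n, hn1, hnn₀⟩ :=
      ((hXLg Q).and_eventually (Filter.eventually_ge_atTop n₀)).exists
    obtain ⟨S, hSX, hSlt, hScard⟩ := exists_stem hn1
    refine ⟨⟨(s ∪ S, G), ?_, hG⟩, ?_, ?_⟩
    · intro a ha
      rcases Finset.mem_coe.mp ha with ha'
      rcases Finset.mem_union.mp ha' with h | h
      · exact hsK h
      · exact (hSX h).1.2
    · refine ⟨n, hnn₀, ?_⟩
      calc tau g Q n = S.card := hScard.symm
      _ ≤ cnt (↑(s ∪ S)) (ff g n) := finset_card_le_cnt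
          (by intro a ha
              simp only [Finset.coe_union, Set.mem_union]
              exact Or.inr ha) hSlt
    · refine ⟨Finset.subset_union_left, subset_rfl, ?_⟩
      intro a ha ha'
      have haS : a ∈ S := by
        rcases Finset.mem_union.mp ha with h | h
        · exact absurd h ha'
        · exact h
      have haX : a ∈ X := hSX haS
      refine ⟨haX.1.1, ?_⟩
      intro b hb
      have hbN : b ≤ N := Finset.le_sup (f := id) hb
      have haN : ¬ a ≤ N := haX.2
      omega
  set 𝒟 : Set (Set P) := (DD '' 𝒢) ∪ Set.range (fun Qn : ℕ × ℕ => EE Qn.1 Qn.2) with h𝒟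
  have h𝒟card : Cardinal.mk ↥𝒟 < Cardinal.continuum := by
    apply lt_of_le_of_lt (Cardinal.mk_union_le _ _)
    apply Cardinal.add_lt_of_lt Cardinal.aleph0_le_continuum
    · exact lt_of_le_of_lt Cardinal.mk_image_le hcard
    · exact lt_of_le_of_lt (le_trans Cardinal.mk_range_le Cardinal.mk_le_aleph0)
        Cardinal.aleph0_lt_continuum
  have h𝒟dense : ∀ D ∈ 𝒟, DenseBelow D := by
    intro D hD
    rcases hD with ⟨H, hH, rfl⟩ | ⟨⟨Q, n₀⟩, rfl⟩
    · exact hDDdense H hH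
    · exact hEEdense Q n₀
  obtain ⟨Gg, ⟨hne, hup, hdir⟩, hmeet⟩ := hMA P hσ 𝒟 h𝒟card h𝒟dense
  set A : Set ℕ := {a | ∃ p ∈ Gg, a ∈ p.s} with hA
  have hstem : ∀ p ∈ Gg, ∀ a ∈ A, a ∈ p.s ∨ a ∈ p.G := by
    intro p hp a ha
    obtain ⟨p', hp', hap'⟩ := ha
    obtain ⟨r, hr, hrp, hrp'⟩ := hdir p hp p' hp'
    have har : a ∈ r.s := hrp'.1 hap'
    by_cases h : a ∈ p.s
    · exact Or.inl h
    · exact Or.inr (hrp.2.2 a har h).1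
  have hALg : Lg g A := by
    intro Q
    rw [Filter.frequently_atTop]
    intro n₀
    obtain ⟨p, hpG, hpE⟩ := hmeet (EE Q n₀) (Or.inr ⟨(Q, n₀), rfl⟩)
    obtain ⟨n, hn1, hn2⟩ := hpE
    refine ⟨n, hn1, le_trans hn2 (cnt_mono ?_ _)⟩
    intro a ha
    exact ⟨p, hpG, by exact_mod_cast ha⟩
  have hAfin : ∀ G ∈ 𝒢, (A \ G).Finite := by
    intro G hG
    obtain ⟨p, hpG, hpD⟩ := hmeet (DD G) (Or.inl ⟨G, hG, rfl⟩)
    apply Set.Finite.subset p.s.finite_toSet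
    rintro a ⟨haA, haG⟩
    rcases hstem p hpG a haA with h | h
    · exact h
    · exact absurd (hpD h) haG
  refine ⟨A, hALg, hAfin, ?_⟩
  rintro a ⟨p, hp, hap⟩
  exact p.ssub hap

end IgNR
end

noncomputable section
namespace IgNR
open scoped Classical

variable (g : ℕ → ℝ)

/-- The task index type. -/
abbrev TIdx : Type := (ℕ → ℕ) ⊕ Set ℕ

/-- A task is served by a family. -/
def served (i : TIdx) (𝒞 : Set (Set ℕ)) : Prop :=
  match i with
  | Sum.inl F => ∃ A ∈ 𝒞, Summable ((F '' A).indicator g)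
  | Sum.inr B => B ∈ 𝒞 ∨ Bᶜ ∈ 𝒞

lemma served_mono {i : TIdx} {𝒞 𝒞' : Set (Set ℕ)} (h : 𝒞 ⊆ 𝒞') (hi : served g i 𝒞) :
    served g i 𝒞' := by
  cases i with
  | inl F => obtain ⟨A, hA, hS⟩ := hi; exact ⟨A, h hA, hS⟩
  | inr B => rcases hi with h1 | h1
             · exact Or.inl (h h1)
             · exact Or.inr (h h1)

/-- A good raw family. -/
def GOODraw (raw : Set (Set ℕ)) : Prop :=
  Set.univ ∈ raw ∧ Cardinal.mk raw < Cardinal.continuum ∧ LgAll g raw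

lemma GOODraw_cl_card {raw : Set (Set ℕ)} (h : GOODraw g raw) :
    Cardinal.mk (cl raw) < Cardinal.continuum := by
  apply lt_of_le_of_lt (mk_cl_le raw)
  exact max_lt Cardinal.aleph0_lt_continuum h.2.1

lemma GOODraw_union_seq_card {raw : Set (Set ℕ)} (h : GOODraw g raw) (seq : ℕ → Set ℕ) :
    Cardinal.mk ↥(raw ∪ Set.range seq) < Cardinal.continuum := by
  apply lt_of_le_of_lt (Cardinal.mk_union_le _ _)
  apply Cardinal.add_lt_of_lt Cardinal.aleph0_le_continuum h.2.1
  exact lt_of_le_of_lt (le_trans Cardinal.mk_range_le (by simp))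
    Cardinal.aleph0_lt_continuum

/-- The value set above a threshold. -/
def Kset (u : ℕ) : Set ℕ := {m | ((2:ℝ) ^ u)⁻¹ < g m}

lemma Kset_finite (h0 : Tendsto g atTop (nhds 0)) (u : ℕ) : (Kset g u).Finite := by
  have h1 : (0:ℝ) < ((2:ℝ)^u)⁻¹ := by positivity
  apply (ngS_finite g h0 h1).subset
  intro m hm
  simp only [Set.mem_setOf_eq] at *
  exact le_of_lt hm

lemma Kset_mono {u u' : ℕ} (h : u ≤ u') : Kset g u ⊆ Kset g u' := by
  intro m hm
  have h1 : ((2:ℝ)^u')⁻¹ ≤ ((2:ℝ)^u)⁻¹ := by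
    apply inv_anti₀ (by positivity)
    exact pow_le_pow_right₀ one_le_two h
  exact lt_of_le_of_lt h1 hm

/-- One step of the construction: any single task can be served while preserving goodness. -/
lemma pick_ex (hMA : MASigmaCentered) (hpos : ∀ m, 0 < g m)
    (h0 : Tendsto g atTop (nhds 0)) (i : TIdx) (raw : Set (Set ℕ))
    (hG : GOODraw g raw) :
    ∃ seq : ℕ → Set ℕ, GOODraw g (raw ∪ Set.range seq) ∧
      served g i (cl (raw ∪ Set.range seq)) := by
  cases i with
  | inr B =>
      rcases LgAll_decide g hG.2.2 B with h | h
      · refine ⟨fun _ => B, ⟨Or.inl hG.1, GOODraw_union_seq_card g hG _, ?_⟩, ?_⟩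
        · rw [Set.range_const]
          rw [show raw ∪ {B} = insert B raw by rw [Set.insert_eq, Set.union_comm]]
          exact h
        · exact Or.inl (subset_cl (Or.inr (Set.mem_range_self 0)))
      · refine ⟨fun _ => Bᶜ, ⟨Or.inl hG.1, GOODraw_union_seq_card g hG _, ?_⟩, ?_⟩
        · rw [Set.range_const]
          rw [show raw ∪ {Bᶜ} = insert Bᶜ raw by rw [Set.insert_eq, Set.union_comm]]
          exact h
        · exact Or.inr (subset_cl (Or.inr (Set.mem_range_self 0)))
  | inl F =>
      by_cases hcase : ∃ u : ℕ, ∀ G ∈ cl raw, Lg g (G ∩ F ⁻¹' (Kset g u))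
      · obtain ⟨u, hu⟩ := hcase
        obtain ⟨A, hALg, hAfin, hAK⟩ := MAstep1 g hMA F (Kset g u) (cl raw)
          (univ_mem_cl raw) (fun X hX Y hY => inter_mem_cl hX hY)
          (GOODraw_cl_card g hG) hu
        have hLgAll : LgAll g (insert A raw) :=
          LgAll_insert_of_pseudo g hG.2.2 hALg hAfin
        refine ⟨fun _ => A, ⟨Or.inl hG.1, GOODraw_union_seq_card g hG _, ?_⟩, ?_⟩
        · rw [Set.range_const]
          rw [show raw ∪ {A} = insert A raw by rw [Set.insert_eq, Set.union_comm]]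
          exact hLgAll
        · refine ⟨A, subset_cl (Or.inr (Set.mem_range_self 0)), ?_⟩
          apply summable_of_ne_finset_zero (s := (Kset_finite g h0 u).toFinset)
          intro m hm
          apply Set.indicator_of_notMem
          intro hc
          apply hm
          rw [Set.Finite.mem_toFinset]
          obtain ⟨a, haA, rfl⟩ := hc
          exact hAK haA
      · push_neg at hcase
        set W : ℕ → Set ℕ := fun u => F ⁻¹' (Kset g u) with hW
        have hAll : ∀ u : ℕ, ∃ G ∈ cl raw, Sm g (G ∩ W u) := by
          intro u
          obtain ⟨G, hGmem, hGn⟩ := hcase u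
          exact ⟨G, hGmem, (not_Lg_iff_Sm g _).mp hGn⟩
        set G0 : ℕ → Set ℕ := fun u => (hAll u).choose with hG0
        have hG0mem : ∀ u, G0 u ∈ cl raw := fun u => (hAll u).choose_spec.1
        have hG0Sm : ∀ u, Sm g (G0 u ∩ W u) := fun u => (hAll u).choose_spec.2
        set Y : ℕ → Set ℕ := fun u => G0 u \ W u with hY
        have hLgY : LgAll g (raw ∪ Set.range Y) := by
          apply LgAll_union_range g hG.2.2 Y G0 W hG0mem hG0Sm
          · intro u u' h
            intro a ha
            exact Kset_mono g h ha
          · intro u; rfl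
        have hGOOD1 : GOODraw g (raw ∪ Set.range Y) :=
          ⟨Or.inl hG.1, GOODraw_union_seq_card g hG _, hLgY⟩
        have hcheap : ∀ u : ℕ, ∃ Y' ∈ cl (raw ∪ Set.range Y), ∀ a ∈ Y',
            g (F a) ≤ ((2:ℝ) ^ u)⁻¹ := by
          intro u
          refine ⟨Y u, subset_cl (Or.inr (Set.mem_range_self u)), ?_⟩
          intro a ha
          have h1 : a ∉ W u := ha.2
          have h2 : F a ∉ Kset g u := h1
          exact le_of_not_gt h2
        obtain ⟨A, hALg, hAfin, hASum⟩ := MAstep2 g hMA hpos h0 F (cl (raw ∪ Set.range Y))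
          (univ_mem_cl _) (fun X hX Y' hY' => inter_mem_cl hX hY')
          (fun X hX => hLgY X hX) (GOODraw_cl_card g hGOOD1) hcheap
        set seq : ℕ → Set ℕ := fun k => match k with
          | 0 => A
          | u + 1 => Y u
        have hrange : Set.range seq = insert A (Set.range Y) := by
          ext x
          constructor
          · rintro ⟨k, rfl⟩
            cases k with
            | zero => exact Set.mem_insert _ _
            | succ u => exact Set.mem_insert_of_mem _ ⟨u, rfl⟩
          · rintro (rfl | ⟨u, rfl⟩)
            · exact ⟨0, rfl⟩
            · exact ⟨u + 1, rfl⟩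
        have hunion : raw ∪ Set.range seq = insert A (raw ∪ Set.range Y) := by
          rw [hrange, Set.union_insert]
        refine ⟨seq, ⟨Or.inl hG.1, GOODraw_union_seq_card g hG _, ?_⟩, ?_⟩
        · rw [hunion]
          exact LgAll_insert_of_pseudo g hLgY hALg hAfin
        · refine ⟨A, subset_cl ?_, hASum⟩
          rw [hunion]
          exact Set.mem_insert _ _

end IgNR
end

noncomputable section
namespace IgNR
open scoped Classical

variable (g : ℕ → ℝ)

lemma mk_TIdx : Cardinal.mk TIdx = Cardinal.continuum := by
  have h1 : Cardinal.mk (ℕ → ℕ) = Cardinal.continuum := by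
    rw [Cardinal.mk_arrow]
    simp [Cardinal.mk_nat, Cardinal.aleph0_power_aleph0]
  have h2 : Cardinal.mk (Set ℕ) = Cardinal.continuum := Cardinal.mk_set_nat
  rw [show TIdx = ((ℕ → ℕ) ⊕ Set ℕ) from rfl, Cardinal.mk_sum, Cardinal.lift_id,
    Cardinal.lift_id, h1, h2, Cardinal.add_eq_self Cardinal.aleph0_le_continuum]

/-- A fixed well-order of the tasks in continuum type. -/
def rel : TIdx → TIdx → Prop := (Cardinal.ord_eq TIdx).choose

instance rel_wo : IsWellOrder TIdx rel := (Cardinal.ord_eq TIdx).choose_spec.choose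

lemma rel_type : (Cardinal.mk TIdx).ord = Ordinal.type rel :=
  (Cardinal.ord_eq TIdx).choose_spec.choose_spec

lemma seg_card_lt (i : TIdx) :
    Cardinal.mk {j : TIdx // rel j i} < Cardinal.continuum := by
  have h1 := Ordinal.typein_lt_type rel i
  rw [← rel_type, Cardinal.lt_ord, mk_TIdx] at h1
  rw [← Ordinal.card_typein]
  exact h1

section construction
variable (hMA : MASigmaCentered) (hpos : ∀ m, 0 < g m)
  (h0 : Tendsto g atTop (nhds 0))

/-- The transfinite sequence of additions. -/
def addF : TIdx → ℕ → Set ℕ :=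
  (IsWellFounded.wf (r := rel)).fix (fun i rec =>
    if h : GOODraw g ({Set.univ} ∪ ⋃ j, ⋃ h' : rel j i, Set.range (rec j h')) then
      (pick_ex g hMA hpos h0 i _ h).choose
    else fun _ => Set.univ)

/-- The raw family built before step `i`. -/
def Braw (i : TIdx) : Set (Set ℕ) :=
  {Set.univ} ∪ ⋃ j, ⋃ _ : rel j i, Set.range (addF g hMA hpos h0 j)

/-- The raw family built through step `i`. -/
def Wraw (i : TIdx) : Set (Set ℕ) :=
  Braw g hMA hpos h0 i ∪ Set.range (addF g hMA hpos h0 i)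

lemma addF_eq (i : TIdx) : addF g hMA hpos h0 i =
    if h : GOODraw g (Braw g hMA hpos h0 i) then
      (pick_ex g hMA hpos h0 i _ h).choose
    else fun _ => Set.univ := by
  show (IsWellFounded.wf (r := rel)).fix _ i = _
  rw [WellFounded.fix_eq]
  rfl

lemma univ_mem_Braw (i : TIdx) : Set.univ ∈ Braw g hMA hpos h0 i := Or.inl rfl

lemma univ_mem_Wraw (i : TIdx) : Set.univ ∈ Wraw g hMA hpos h0 i :=
  Or.inl (univ_mem_Braw g hMA hpos h0 i)

lemma Wraw_sub_Braw {j i : TIdx} (h : rel j i) :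
    Wraw g hMA hpos h0 j ⊆ Braw g hMA hpos h0 i := by
  rintro X (hX | hX)
  · rcases hX with hX | hX
    · exact Or.inl hX
    · obtain ⟨j', hj'⟩ := Set.mem_iUnion.mp hX
      obtain ⟨hj'', hX'⟩ := Set.mem_iUnion.mp hj'
      refine Or.inr (Set.mem_iUnion.mpr ⟨j', Set.mem_iUnion.mpr ⟨?_, hX'⟩⟩)
      exact _root_.trans hj'' h
  · exact Or.inr (Set.mem_iUnion.mpr ⟨j, Set.mem_iUnion.mpr ⟨h, hX⟩⟩)

lemma Wraw_mono {j i : TIdx} (h : rel j i) :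
    Wraw g hMA hpos h0 j ⊆ Wraw g hMA hpos h0 i :=
  (Wraw_sub_Braw g hMA hpos h0 h).trans Set.subset_union_left

/-- Finite covering of raw unions by single stages. -/
lemma cover (pred : TIdx → Prop) (t : Finset (Set ℕ))
    (hsub : ↑t ⊆ ({Set.univ} : Set (Set ℕ)) ∪
      ⋃ j, ⋃ _ : pred j, Set.range (addF g hMA hpos h0 j)) :
    (↑t : Set (Set ℕ)) ⊆ {Set.univ} ∨
      ∃ j, pred j ∧ (↑t : Set (Set ℕ)) ⊆ Wraw g hMA hpos h0 j := by
  induction t using Finset.induction_on with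
  | empty => left; simp
  | @insert X t hX ih =>
      have hins : (↑(insert X t) : Set (Set ℕ)) = insert X ↑t := by push_cast; rfl
      rw [hins] at hsub
      have ht := ih ((Set.subset_insert X ↑t).trans hsub)
      have hXmem := hsub (Set.mem_insert X ↑t)
      rcases hXmem with hXu | hXr
      · rcases ht with ht | ⟨j, hj, hsub'⟩
        · left; rw [hins]; exact Set.insert_subset hXu ht
        · right
          refine ⟨j, hj, ?_⟩
          rw [hins]
          refine Set.insert_subset ?_ hsub'
          rw [hXu]
          exact univ_mem_Wraw g hMA hpos h0 j
      · obtain ⟨j₀, hj₀⟩ := Set.mem_iUnion.mp hXr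
        obtain ⟨hj₀p, hX'⟩ := Set.mem_iUnion.mp hj₀
        have hXW : X ∈ Wraw g hMA hpos h0 j₀ := Or.inr hX'
        rcases ht with ht | ⟨j, hj, hsub'⟩
        · right
          refine ⟨j₀, hj₀p, ?_⟩
          rw [hins]
          refine Set.insert_subset hXW ?_
          intro Z hZ
          have : Z = Set.univ := ht hZ
          rw [this]
          exact univ_mem_Wraw g hMA hpos h0 j₀
        · rcases trichotomous_of rel j₀ j with hlt | heq | hgt
          · right
            refine ⟨j, hj, ?_⟩
            rw [hins]
            exact Set.insert_subset (Wraw_mono g hMA hpos h0 hlt hXW) hsub'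
          · right
            refine ⟨j, hj, ?_⟩
            rw [hins]
            subst heq
            exact Set.insert_subset hXW hsub'
          · right
            refine ⟨j₀, hj₀p, ?_⟩
            rw [hins]
            exact Set.insert_subset hXW
              (hsub'.trans (Wraw_mono g hMA hpos h0 hgt))

lemma LgAll_of_cover (pred : TIdx → Prop)
    (hWgood : ∀ j, pred j → LgAll g (Wraw g hMA hpos h0 j)) :
    LgAll g ({Set.univ} ∪ ⋃ j, ⋃ _ : pred j, Set.range (addF g hMA hpos h0 j)) := by
  rintro Z ⟨t, ht, rfl⟩
  rcases cover g hMA hpos h0 pred t ht with h | ⟨j, hj, hsub⟩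
  · rcases Finset.subset_singleton_iff.mp (by exact_mod_cast h) with rfl | rfl
    · simpa using Lg_univ g
    · simpa using Lg_univ g
  · exact hWgood j hj _ ⟨t, hsub, rfl⟩

lemma Braw_card (i : TIdx) :
    Cardinal.mk (Braw g hMA hpos h0 i) < Cardinal.continuum := by
  have hsub : Braw g hMA hpos h0 i ⊆ {Set.univ} ∪
      Set.range (fun p : {j : TIdx // rel j i} × ℕ => addF g hMA hpos h0 p.1.1 p.2) := by
    rintro X (hX | hX)
    · exact Or.inl hX
    · obtain ⟨j, hj⟩ := Set.mem_iUnion.mp hX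
      obtain ⟨hjr, k, hk⟩ := Set.mem_iUnion.mp hj
      exact Or.inr ⟨(⟨j, hjr⟩, k), hk⟩
  apply lt_of_le_of_lt (Cardinal.mk_le_mk_of_subset hsub)
  apply lt_of_le_of_lt (Cardinal.mk_union_le _ _)
  apply Cardinal.add_lt_of_lt Cardinal.aleph0_le_continuum
  · exact lt_of_le_of_lt (by simp) Cardinal.aleph0_lt_continuum
  · apply lt_of_le_of_lt Cardinal.mk_range_le
    rw [Cardinal.mk_prod, Cardinal.lift_id, Cardinal.lift_id]
    apply Cardinal.mul_lt_of_lt Cardinal.aleph0_le_continuum (seg_card_lt i)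
    simp [Cardinal.mk_nat, Cardinal.aleph0_lt_continuum]

/-- The main transfinite induction. -/
lemma main_ind (i : TIdx) : GOODraw g (Wraw g hMA hpos h0 i) ∧
    served g i (cl (Wraw g hMA hpos h0 i)) := by
  induction i using (IsWellFounded.wf (r := rel)).induction with
  | _ i IH =>
    have hBgood : GOODraw g (Braw g hMA hpos h0 i) := by
      refine ⟨univ_mem_Braw g hMA hpos h0 i, Braw_card g hMA hpos h0 i, ?_⟩
      exact LgAll_of_cover g hMA hpos h0 (fun j => rel j i)
        (fun j hj => ((IH j hj).1).2.2)
    have heq := addF_eq g hMA hpos h0 i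
    rw [dif_pos hBgood] at heq
    have hspec := (pick_ex g hMA hpos h0 i _ hBgood).choose_spec
    rw [← heq] at hspec
    exact hspec

lemma Wraw_good (i : TIdx) : GOODraw g (Wraw g hMA hpos h0 i) :=
  (main_ind g hMA hpos h0 i).1

/-- The final raw family. -/
def Phiraw : Set (Set ℕ) :=
  {Set.univ} ∪ ⋃ j, ⋃ _ : True, Set.range (addF g hMA hpos h0 j)

lemma Wraw_sub_Phiraw (i : TIdx) : Wraw g hMA hpos h0 i ⊆ Phiraw g hMA hpos h0 := by
  rintro X (hX | hX)
  · rcases hX with hX | hX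
    · exact Or.inl hX
    · obtain ⟨j, hj⟩ := Set.mem_iUnion.mp hX
      obtain ⟨_, hX'⟩ := Set.mem_iUnion.mp hj
      exact Or.inr (Set.mem_iUnion.mpr ⟨j, Set.mem_iUnion.mpr ⟨trivial, hX'⟩⟩)
  · exact Or.inr (Set.mem_iUnion.mpr ⟨i, Set.mem_iUnion.mpr ⟨trivial, hX⟩⟩)

lemma Phiraw_LgAll : LgAll g (Phiraw g hMA hpos h0) :=
  LgAll_of_cover g hMA hpos h0 (fun _ => True)
    (fun j _ => (Wraw_good g hMA hpos h0 j).2.2)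

lemma Phiraw_served (i : TIdx) : served g i (cl (Phiraw g hMA hpos h0)) :=
  served_mono g (cl_mono (Wraw_sub_Phiraw g hMA hpos h0 i))
    (main_ind g hMA hpos h0 i).2

end construction
end IgNR
end

noncomputable section
namespace IgNR
open scoped Classical

variable (g : ℕ → ℝ)

section final
variable (hMA : MASigmaCentered) (hpos : ∀ m, 0 < g m)
  (h0 : Tendsto g atTop (nhds 0))

/-- The final intersection-closed family. -/
def Phi : Set (Set ℕ) := cl (Phiraw g hMA hpos h0)

lemma Phi_univ : Set.univ ∈ Phi g hMA hpos h0 := univ_mem_cl _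

lemma Phi_inter {X Y : Set ℕ} (hX : X ∈ Phi g hMA hpos h0) (hY : Y ∈ Phi g hMA hpos h0) :
    X ∩ Y ∈ Phi g hMA hpos h0 := inter_mem_cl hX hY

lemma Phi_Lg {X : Set ℕ} (hX : X ∈ Phi g hMA hpos h0) : Lg g X :=
  Phiraw_LgAll g hMA hpos h0 X hX

lemma Phi_decide (B : Set ℕ) : B ∈ Phi g hMA hpos h0 ∨ Bᶜ ∈ Phi g hMA hpos h0 :=
  Phiraw_served g hMA hpos h0 (Sum.inr B)

lemma Phi_serve (F : ℕ → ℕ) :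
    ∃ A ∈ Phi g hMA hpos h0, Summable ((F '' A).indicator g) :=
  Phiraw_served g hMA hpos h0 (Sum.inl F)

/-- The generated filter. -/
def UFil : Filter ℕ where
  sets := {A | ∃ G ∈ Phi g hMA hpos h0, G ⊆ A}
  univ_sets := ⟨Set.univ, Phi_univ g hMA hpos h0, subset_rfl⟩
  sets_of_superset := by
    rintro A B ⟨G, hG, hsub⟩ hAB
    exact ⟨G, hG, hsub.trans hAB⟩
  inter_sets := by
    rintro A B ⟨G1, h1, s1⟩ ⟨G2, h2, s2⟩
    exact ⟨G1 ∩ G2, Phi_inter g hMA hpos h0 h1 h2,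
      Set.subset_inter (Set.inter_subset_left.trans s1) (Set.inter_subset_right.trans s2)⟩

lemma UFil_iff (s : Set ℕ) : sᶜ ∉ UFil g hMA hpos h0 ↔ s ∈ UFil g hMA hpos h0 := by
  constructor
  · intro h
    rcases Phi_decide g hMA hpos h0 s with h1 | h1
    · exact ⟨s, h1, subset_rfl⟩
    · exact absurd ⟨sᶜ, h1, subset_rfl⟩ h
  · rintro ⟨G1, h1, s1⟩ ⟨G2, h2, s2⟩
    have h3 : Lg g (G1 ∩ G2) := Phi_Lg g hMA hpos h0 (Phi_inter g hMA hpos h0 h1 h2)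
    have h4 : (G1 ∩ G2) = ∅ := by
      apply Set.subset_empty_iff.mp
      intro a ⟨ha1, ha2⟩
      exact (s2 ha2) (s1 ha1)
    have h5 := Lg_infinite g h3
    rw [h4] at h5
    exact h5 (Set.finite_empty)

/-- The ultrafilter. -/
def Ult : Ultrafilter ℕ := Ultrafilter.ofComplNotMemIff (UFil g hMA hpos h0)
  (UFil_iff g hMA hpos h0)

lemma Ult_coe : (↑(Ult g hMA hpos h0) : Filter ℕ) = UFil g hMA hpos h0 := rfl

lemma Ult_le_cofinite : (↑(Ult g hMA hpos h0) : Filter ℕ) ≤ Filter.cofinite := by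
  intro s hs
  rw [Filter.mem_cofinite] at hs
  show s ∈ UFil g hMA hpos h0
  rw [← UFil_iff]
  rintro ⟨G, hG, hsub⟩
  have h1 := Lg_infinite g (Phi_Lg g hMA hpos h0 hG)
  exact h1 (hs.subset hsub)

lemma Ult_IUlt : IUlt (Ult g hMA hpos h0) (Ig g) := by
  intro F
  obtain ⟨A, hA, hsum⟩ := Phi_serve g hMA hpos h0 F
  refine ⟨A, ⟨A, hA, subset_rfl⟩, hsum⟩

lemma count_eq_cnt (A : Set ℕ) (k : ℕ) : Nat.count (· ∈ A) k = cnt A k := by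
  rw [Nat.count_eq_card_filter_range]
  rfl

lemma nth_lt_of_count {A : Set ℕ} (hA : A.Infinite) {n k : ℕ}
    (h : n < Nat.count (· ∈ A) k) : Nat.nth (· ∈ A) n < k := by
  have hinf : {x | (fun a => a ∈ A) x}.Infinite := by simpa using hA
  by_contra hc
  push_neg at hc
  have h1 : Nat.count (· ∈ A) k ≤ Nat.count (· ∈ A) (Nat.nth (· ∈ A) n) :=
    Nat.count_monotone _ hc
  rw [Nat.count_nth_of_infinite hinf] at h1
  omega

lemma Ult_not_rapid : ¬ Rapid (Ult g hMA hpos h0) := by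
  intro hR
  obtain ⟨A, hAU, hAinf, hev⟩ := hR (ff g)
  obtain ⟨G, hG, hsub⟩ := hAU
  have hLgA : Lg g A := Lg_mono g hsub (Phi_Lg g hMA hpos h0 hG)
  have hfreq := (hLgA 0).and_eventually hev
  obtain ⟨n, hn1, hn2⟩ := hfreq.exists
  have h1 : tau g 0 n = n + 2 := rfl
  have h2 : n < Nat.count (· ∈ A) (ff g n) := by
    rw [count_eq_cnt]
    omega
  have h3 := nth_lt_of_count hAinf h2
  omega

end final
end IgNR
end

theorem Ig_not_rapid (hMA : MASigmaCentered) (g : ℕ → ℝ) (hg : SummableTall g) :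
    ∃ U : Ultrafilter ℕ, (↑U : Filter ℕ) ≤ Filter.cofinite ∧
      IUlt U (Ig g) ∧ ¬ Rapid U := by
  obtain ⟨hpos, _, h0⟩ := hg
  exact ⟨IgNR.Ult g hMA hpos h0, IgNR.Ult_le_cofinite g hMA hpos h0,
    IgNR.Ult_IUlt g hMA hpos h0, IgNR.Ult_not_rapid g hMA hpos h0⟩
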